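/- arXiv:2404.06985 — 7 statements merged into one kernel-verified Lean document; each statement's English description precedes it below -/
import Mathlib

section
/- Let X ⊆ ℝ^n, U ⊆ ℝ^m, X₀ ⊆ X and X₁ ⊆ X, and let f : ℝ^n × ℝ^m → ℝ^n. Suppose v : ℝ^n → ℝ is continuously differentiable and satisfies: v(x) ≤ 0 for all x ∈ X₁; v(x) > 0 for all x ∈ X₀; and ⟨f(x,u), ∇v(x)⟩ ≥ 0 for all x ∈ X and u ∈ U. Then for every differentiable curve x : [0,∞) → ℝ^n and every function u : [0,∞) → U such that x(0) ∈ X₀, x(t) ∈ X for all t ≥ 0, and x'(t) = f(x(t), u(t)) for all t ≥ 0, it holds that x(t) ∉ X₁ for all t ≥ 0. -/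
open scoped RealInnerProductSpace

/-- Barrier certificate sufficiency (Theorem 1 of Prajna–Jadbabaie):
a C¹ function `v` positive on `X₀`, nonpositive on `X₁`, and with
`⟨f(x,u), ∇v(x)⟩ ≥ 0` on `X × U` certifies that no admissible trajectory of
`ẋ = f(x,u)` starting in `X₀` and staying in `X` ever reaches `X₁`. -/
theorem barrier_certificate_safety {n m : ℕ}
    (X X₀ X₁ : Set (EuclideanSpace ℝ (Fin n)))
    (U : Set (EuclideanSpace ℝ (Fin m)))
    (hX₀X : X₀ ⊆ X) (hX₁X : X₁ ⊆ X)
    (f : EuclideanSpace ℝ (Fin n) × EuclideanSpace ℝ (Fin m) → EuclideanSpace ℝ (Fin n))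
    (v : EuclideanSpace ℝ (Fin n) → ℝ)
    (hv : ContDiff ℝ 1 v)
    (hv₁ : ∀ x ∈ X₁, v x ≤ 0)
    (hv₀ : ∀ x ∈ X₀, 0 < v x)
    (hlie : ∀ x ∈ X, ∀ u ∈ U, 0 ≤ ⟪f (x, u), gradient v x⟫) :
    ∀ (x : ℝ → EuclideanSpace ℝ (Fin n)) (u : ℝ → EuclideanSpace ℝ (Fin m)),
      (∀ t, 0 ≤ t → u t ∈ U) →
      x 0 ∈ X₀ →
      (∀ t, 0 ≤ t → x t ∈ X) →
      (∀ t, 0 ≤ t → HasDerivWithinAt x (f (x t, u t)) (Set.Ici 0) t) →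
      ∀ t, 0 ≤ t → x t ∉ X₁ := by
  intro x u hu hx0 hxX hderiv t ht hmem
  -- The function g = v ∘ x is monotone on [0, ∞).
  set g : ℝ → ℝ := fun s => v (x s) with hg
  have hvdiff : Differentiable ℝ v := hv.differentiable one_ne_zero
  have hderivg : ∀ s ∈ interior (Set.Ici (0:ℝ)),
      HasDerivWithinAt g (⟪f (x s, u s), gradient v (x s)⟫) (interior (Set.Ici (0:ℝ))) s := by
    intro s hs
    rw [interior_Ici] at hs ⊢
    have hs' : (0:ℝ) ≤ s := le_of_lt hs
    have hdx : HasDerivWithinAt x (f (x s, u s)) (Set.Ioi 0) s :=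
      (hderiv s hs').mono Set.Ioi_subset_Ici_self
    have hgrad : HasGradientAt v (gradient v (x s)) (x s) :=
      (hvdiff (x s)).hasGradientAt
    have := hgrad.hasFDerivAt.comp_hasDerivWithinAt s hdx
    exact this.congr_deriv (by simp [real_inner_comm])
  have hmono : MonotoneOn g (Set.Ici (0:ℝ)) := by
    apply monotoneOn_of_hasDerivWithinAt_nonneg (convex_Ici 0)
      (hv.continuous.comp_continuousOn
        (fun s hs => (hderiv s hs).continuousWithinAt)) hderivg
    intro s hs
    rw [interior_Ici] at hs
    exact hlie (x s) (hxX s (le_of_lt hs)) (u s) (hu s (le_of_lt hs))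
  have h0 : 0 < g 0 := hv₀ (x 0) hx0
  have h1 : g t ≤ 0 := hv₁ (x t) hmem
  have := hmono (Set.self_mem_Ici) (Set.mem_Ici.mpr ht) ht
  linarith
end

section
/- Let T > 0, let X₀, X₁, X ⊆ ℝ^n and U ⊆ ℝ^n be sets, and suppose there exists a continuously differentiable function v : ℝ × ℝ^n → ℝ such that v(0,x) ≥ 1 for all x ∈ X₀, v(T,x) ≤ 0 for all x ∈ X₁, and ∂_t v(t,x) + ⟨u, ∇_x v(t,x)⟩ ≥ 0 for all (t,x,u) ∈ [0,T] × X × U. Then there do not exist a Borel probability measure μ₀ supported in X₀, a finite Borel measure μ_T supported in X₁, and a finite Borel measure μ supported in [0,T] × X × U such that for every continuously differentiable w : ℝ × ℝ^n → ℝ, ∫ w(T,x) dμ_T(x) = ∫ w(0,x) dμ₀(x) + ∫ (∂_t w(t,x) + ⟨u, ∇_x w(t,x)⟩) dμ(t,x,u). -/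
open MeasureTheory

/-- Weak duality direction of Theorem 4.1: existence of a time-dependent
barrier function `v` rules out any triple of measures `(μ₀, μ_T, μ)`
satisfying the weak control Liouville equation. -/
theorem barrier_implies_measure_LP_infeasible {n : ℕ} (T : ℝ) (hT : 0 < T)
    (X₀ X₁ X U : Set (EuclideanSpace ℝ (Fin n)))
    (v : ℝ × EuclideanSpace ℝ (Fin n) → ℝ) (hv : ContDiff ℝ 1 v)
    (hv₀ : ∀ x ∈ X₀, 1 ≤ v (0, x))
    (hv₁ : ∀ x ∈ X₁, v (T, x) ≤ 0)
    (hlie : ∀ t ∈ Set.Icc (0 : ℝ) T, ∀ x ∈ X, ∀ u ∈ U,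
      0 ≤ fderiv ℝ v (t, x) (1, u)) :
    ¬ ∃ (μ₀ μT : Measure (EuclideanSpace ℝ (Fin n)))
        (μ : Measure (ℝ × EuclideanSpace ℝ (Fin n) × EuclideanSpace ℝ (Fin n))),
      IsProbabilityMeasure μ₀ ∧ IsFiniteMeasure μT ∧ IsFiniteMeasure μ ∧
      μ₀ X₀ᶜ = 0 ∧ μT X₁ᶜ = 0 ∧
      μ (Set.Icc (0 : ℝ) T ×ˢ X ×ˢ U)ᶜ = 0 ∧
      ∀ w : ℝ × EuclideanSpace ℝ (Fin n) → ℝ, ContDiff ℝ 1 w →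
        ∫ x, w (T, x) ∂μT =
          ∫ x, w (0, x) ∂μ₀ + ∫ p, fderiv ℝ w (p.1, p.2.1) (1, p.2.2) ∂μ := by
  rintro ⟨μ₀, μT, μ, hP, hFT, hF, h₀, h₁, hμ, heq⟩
  -- use the bounded barrier `w = arctan ∘ v`
  set w : ℝ × EuclideanSpace ℝ (Fin n) → ℝ := fun p => Real.arctan (v p) with hw
  have hwC : ContDiff ℝ 1 w := hv.arctan
  have hdw : ∀ p : ℝ × EuclideanSpace ℝ (Fin n),
      fderiv ℝ w p = (1 / (1 + (v p) ^ 2)) • fderiv ℝ v p := by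
    intro p
    have h1 := (hv.differentiable one_ne_zero p).hasFDerivAt
    have h2 := (Real.hasDerivAt_arctan (v p)).comp_hasFDerivAt p h1
    exact h2.fderiv
  have key := heq w hwC
  -- the terminal integral is nonpositive
  have hae₁ : ∀ᵐ x ∂μT, x ∈ X₁ := by
    rw [MeasureTheory.ae_iff]
    exact h₁
  have hI₁ : ∫ x, w (T, x) ∂μT ≤ 0 := by
    apply integral_nonpos_of_ae
    filter_upwards [hae₁] with x hx
    have := hv₁ x hx
    have h2 : Real.arctan (v (T, x)) ≤ Real.arctan 0 :=
      Real.arctan_strictMono.monotone this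
    simpa [hw, Real.arctan_zero] using h2
  -- the occupation integral is nonnegative
  have haeμ : ∀ᵐ p ∂μ, p ∈ Set.Icc (0 : ℝ) T ×ˢ X ×ˢ U := by
    rw [MeasureTheory.ae_iff]
    exact hμ
  have hIμ : 0 ≤ ∫ p, fderiv ℝ w (p.1, p.2.1) (1, p.2.2) ∂μ := by
    apply integral_nonneg_of_ae
    filter_upwards [haeμ] with p hp
    obtain ⟨ht, hx, hu⟩ := hp
    have h0 := hlie p.1 ht p.2.1 hx p.2.2 hu
    rw [hdw]
    have hpos : (0 : ℝ) < 1 / (1 + (v (p.1, p.2.1)) ^ 2) := by positivity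
    simpa using mul_nonneg hpos.le h0
  -- the initial integral is at least `arctan 1 > 0`
  have hae₀ : ∀ᵐ x ∂μ₀, x ∈ X₀ := by
    rw [MeasureTheory.ae_iff]
    exact h₀
  have hcont : Continuous fun x : EuclideanSpace ℝ (Fin n) => w (0, x) :=
    Real.continuous_arctan.comp (hv.continuous.comp (continuous_const.prodMk continuous_id))
  have hint : Integrable (fun x => w (0, x)) μ₀ := by
    refine (integrable_const (Real.pi / 2)).mono hcont.aestronglyMeasurable ?_
    filter_upwards with x
    simp only [hw, Real.norm_eq_abs]
    rw [abs_of_nonneg (by positivity : (0:ℝ) ≤ Real.pi / 2)]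
    exact (abs_lt.mpr ⟨Real.neg_pi_div_two_lt_arctan _, Real.arctan_lt_pi_div_two _⟩).le
  have hI₀ : Real.arctan 1 ≤ ∫ x, w (0, x) ∂μ₀ := by
    have := integral_mono_ae (integrable_const (Real.arctan 1)) hint ?_
    · simpa [integral_const, measure_univ] using this
    · filter_upwards [hae₀] with x hx
      exact Real.arctan_strictMono.monotone (hv₀ x hx)
  have hpos : 0 < Real.arctan 1 := by
    have := Real.arctan_strictMono (one_pos : (0:ℝ) < 1)
    simpa [Real.arctan_zero] using this
  linarith
end

section
/- Let T > 0, let X₀, X₁, X ⊆ ℝ^n and U ⊆ ℝ^n be sets, with X₀ compact and nonempty. Suppose there exists a continuously differentiable v : ℝ × ℝ^n → ℝ with v(0,x) > 0 for all x ∈ X₀, v(T,x) ≤ 0 for all x ∈ X₁, and ∂_t v(t,x) + ⟨u, ∇_x v(t,x)⟩ ≥ 0 for all (t,x,u) ∈ [0,T] × X × U. Then there exists a continuously differentiable ṽ : ℝ × ℝ^n → ℝ satisfying the strict inequalities: ṽ(0,x) > 0 for all x ∈ X₀, ṽ(T,x) < 0 for all x ∈ X₁, and ∂_t ṽ(t,x)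 + ⟨u, ∇_x ṽ(t,x)⟩ > 0 for all (t,x,u) ∈ [0,T] × X × U. In particular, one may take ṽ(t,x) = v(t,x) − ε(1 − t/(2T)) for any ε with 0 < ε < min_{x ∈ X₀} v(0,x). -/
/-- Lemma A.2 of the paper: the time-dependent barrier program may be
restricted to strict inequalities without conservatism.  Moreover the
specific shift `ṽ(t,x) = v(t,x) − ε(1 − t/(2T))` works for any
`0 < ε < min_{x ∈ X₀} v(0,x)`. -/
theorem barrier_strict_reformulation {n : ℕ} (T : ℝ) (hT : 0 < T)
    (X₀ X₁ X U : Set (EuclideanSpace ℝ (Fin n)))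
    (hX₀c : IsCompact X₀) (hX₀ne : X₀.Nonempty)
    (v : ℝ × EuclideanSpace ℝ (Fin n) → ℝ) (hv : ContDiff ℝ 1 v)
    (hv₀ : ∀ x ∈ X₀, 0 < v (0, x))
    (hv₁ : ∀ x ∈ X₁, v (T, x) ≤ 0)
    (hlie : ∀ t ∈ Set.Icc (0 : ℝ) T, ∀ x ∈ X, ∀ u ∈ U,
      0 ≤ fderiv ℝ v (t, x) (1, u)) :
    (∃ w : ℝ × EuclideanSpace ℝ (Fin n) → ℝ, ContDiff ℝ 1 w ∧
      (∀ x ∈ X₀, 0 < w (0, x)) ∧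
      (∀ x ∈ X₁, w (T, x) < 0) ∧
      (∀ t ∈ Set.Icc (0 : ℝ) T, ∀ x ∈ X, ∀ u ∈ U,
        0 < fderiv ℝ w (t, x) (1, u))) ∧
    (∀ ε : ℝ, 0 < ε → (∀ x ∈ X₀, ε < v (0, x)) →
      (∀ x ∈ X₀, 0 < (fun p : ℝ × EuclideanSpace ℝ (Fin n) =>
          v p - ε * (1 - p.1 / (2 * T))) (0, x)) ∧
      (∀ x ∈ X₁, (fun p : ℝ × EuclideanSpace ℝ (Fin n) =>
          v p - ε * (1 - p.1 / (2 * T))) (T, x) < 0) ∧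
      (∀ t ∈ Set.Icc (0 : ℝ) T, ∀ x ∈ X, ∀ u ∈ U,
        0 < fderiv ℝ (fun p : ℝ × EuclideanSpace ℝ (Fin n) =>
          v p - ε * (1 - p.1 / (2 * T))) (t, x) (1, u))) := by
  have hT' : (2 * T) ≠ 0 := by positivity
  -- main computation for any valid ε
  have main : ∀ ε : ℝ, 0 < ε → (∀ x ∈ X₀, ε < v (0, x)) →
      (∀ x ∈ X₀, 0 < (fun p : ℝ × EuclideanSpace ℝ (Fin n) =>
          v p - ε * (1 - p.1 / (2 * T))) (0, x)) ∧
      (∀ x ∈ X₁, (fun p : ℝ × EuclideanSpace ℝ (Fin n) =>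
          v p - ε * (1 - p.1 / (2 * T))) (T, x) < 0) ∧
      (∀ t ∈ Set.Icc (0 : ℝ) T, ∀ x ∈ X, ∀ u ∈ U,
        0 < fderiv ℝ (fun p : ℝ × EuclideanSpace ℝ (Fin n) =>
          v p - ε * (1 - p.1 / (2 * T))) (t, x) (1, u)) := by
    intro ε hε hεlt
    refine ⟨?_, ?_, ?_⟩
    · intro x hx
      have := hεlt x hx
      simp only []
      have : (0:ℝ) / (2*T) = 0 := by simp
      simp only [this]
      linarith [hεlt x hx]
    · intro x hx
      have h1 : T / (2 * T) = 1/2 := by field_simp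
      simp only [h1]
      have := hv₁ x hx
      nlinarith
    · intro t ht x hx u hu
      set c : ℝ := ε / (2 * T) with hc
      have hcpos : 0 < c := by positivity
      have hvd : HasFDerivAt v (fderiv ℝ v (t, x)) (t, x) :=
        ((hv.differentiable one_ne_zero) (t, x)).hasFDerivAt
      have h1 : HasFDerivAt (fun q : ℝ × EuclideanSpace ℝ (Fin n) => q.1)
          (ContinuousLinearMap.fst ℝ ℝ (EuclideanSpace ℝ (Fin n))) (t, x) := hasFDerivAt_fst
      have h2 := (h1.const_mul c).const_sub ε
      have hfun : (fun q : ℝ × EuclideanSpace ℝ (Fin n) => ε * (1 - q.1 / (2 * T)))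
          = fun q : ℝ × EuclideanSpace ℝ (Fin n) => ε - c * q.1 := by
        funext q; rw [hc]; ring
      rw [← hfun] at h2
      have hw := hvd.sub h2
      rw [(show HasFDerivAt (fun p : ℝ × EuclideanSpace ℝ (Fin n) =>
          v p - ε * (1 - p.1 / (2 * T))) _ (t, x) from hw).fderiv]
      have h0 := hlie t ht x hx u hu
      have heval : (ContinuousLinearMap.fst ℝ ℝ (EuclideanSpace ℝ (Fin n)))
          ((1:ℝ), u) = 1 := rfl
      simp only [ContinuousLinearMap.sub_apply, ContinuousLinearMap.neg_apply,
        ContinuousLinearMap.smul_apply, heval, smul_eq_mul, mul_one]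
      linarith
  refine ⟨?_, main⟩
  -- existence: pick ε = (min of v(0,·) on X₀)/2
  have hcont : Continuous fun x : EuclideanSpace ℝ (Fin n) => v (0, x) :=
    hv.continuous.comp (continuous_const.prodMk continuous_id)
  obtain ⟨x₀, hx₀, hmin⟩ := hX₀c.exists_isMinOn hX₀ne hcont.continuousOn
  set m := v (0, x₀) with hm
  have hmpos : 0 < m := hv₀ x₀ hx₀
  have hεlt : ∀ x ∈ X₀, m / 2 < v (0, x) := by
    intro x hx
    have := hmin hx
    simp only [Set.mem_setOf_eq] at this
    linarith [hmin hx]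
  obtain ⟨h1, h2, h3⟩ := main (m/2) (by positivity) hεlt
  exact ⟨_, (hv.sub ((contDiff_const.mul ((contDiff_const.sub
      ((contDiff_fst.div_const _))) : ContDiff ℝ 1 _)))), h1, h2, h3⟩
end

section
/- Let T > 0, let X ⊆ ℝ^n be a compact set, and let v : ℝ × ℝ^n → ℝ be continuously differentiable. Then the following are equivalent: (i) ∂_t v(t,x) + ⟨u, ∇_x v(t,x)⟩ > 0 for all (t,x) ∈ [0,T] × X and all u ∈ [-1,1]^n; (ii) there exist continuous functions ζᵢ⁺, ζᵢ⁻ : ℝ × ℝ^n → ℝ for i = 1,…,n that are nonnegative on [0,T] × X, satisfy ζᵢ⁺(t,x) − ζᵢ⁻(t,x) = ∂_{x_i} v(t,x) for all (t,x) ∈ [0,T] × X and i = 1,…,n, and such that ∂_t v(t,x) − Σᵢ₌₁ⁿ (ζᵢ⁺(t,x) + ζᵢ⁻(t,x)) > 0 for all (t,x) ∈ [0,T] × X. -/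
lemma box_repr {n : ℕ} (u : EuclideanSpace ℝ (Fin n)) :
    u = ∑ i, u i • EuclideanSpace.single i (1 : ℝ) := by
  have := (EuclideanSpace.basisFun (Fin n) ℝ).toBasis.sum_repr u
  simpa [EuclideanSpace.basisFun_apply, EuclideanSpace.basisFun_repr] using this.symm

lemma box_expand {n : ℕ} (v : ℝ × EuclideanSpace ℝ (Fin n) → ℝ)
    (p : ℝ × EuclideanSpace ℝ (Fin n)) (u : EuclideanSpace ℝ (Fin n)) :
    fderiv ℝ v p (1, u) =
      fderiv ℝ v p (1, 0) + ∑ i, u i * fderiv ℝ v p (0, EuclideanSpace.single i 1) := by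
  have hu : ((1 : ℝ), u) =
      ((1 : ℝ), 0) + ∑ i, u i • ((0 : ℝ), EuclideanSpace.single i (1 : ℝ)) := by
    rw [Prod.ext_iff]
    refine ⟨by simp [Prod.fst_sum], ?_⟩
    rw [Prod.snd_add, Prod.snd_sum]
    simp only [Prod.smul_snd, Prod.snd_zero, zero_add]
    exact box_repr u
  rw [hu, map_add, map_sum]
  simp only [map_smul, smul_eq_mul]

/-- Theorem 5.1 of the paper: for the unit-box control set `U = [-1,1]^n`,
the strict Lie derivative constraint of the time-dependent barrier program
for `ẋ = u` is equivalent to a control-eliminated form with continuous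
nonnegative multipliers `ζᵢ⁺, ζᵢ⁻` whose differences recover `∂_{x_i} v`. -/
theorem box_control_elimination {n : ℕ} (T : ℝ) (hT : 0 < T)
    (X : Set (EuclideanSpace ℝ (Fin n))) (hX : IsCompact X)
    (v : ℝ × EuclideanSpace ℝ (Fin n) → ℝ) (hv : ContDiff ℝ 1 v) :
    (∀ t ∈ Set.Icc (0 : ℝ) T, ∀ x ∈ X, ∀ u : EuclideanSpace ℝ (Fin n),
      (∀ i, |u i| ≤ 1) → 0 < fderiv ℝ v (t, x) (1, u)) ↔
    (∃ ζp ζm : Fin n → ℝ × EuclideanSpace ℝ (Fin n) → ℝ,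
      (∀ i, Continuous (ζp i)) ∧ (∀ i, Continuous (ζm i)) ∧
      (∀ i, ∀ t ∈ Set.Icc (0 : ℝ) T, ∀ x ∈ X,
        0 ≤ ζp i (t, x) ∧ 0 ≤ ζm i (t, x)) ∧
      (∀ i, ∀ t ∈ Set.Icc (0 : ℝ) T, ∀ x ∈ X,
        ζp i (t, x) - ζm i (t, x) =
          fderiv ℝ v (t, x) (0, EuclideanSpace.single i 1)) ∧
      (∀ t ∈ Set.Icc (0 : ℝ) T, ∀ x ∈ X,
        0 < fderiv ℝ v (t, x) (1, 0) - ∑ i, (ζp i (t, x) + ζm i (t, x)))) := by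
  have hdc : ∀ i : Fin n,
      Continuous (fun p => fderiv ℝ v p (0, EuclideanSpace.single i 1)) :=
    fun i => (hv.continuous_fderiv one_ne_zero).clm_apply continuous_const
  constructor
  · intro h
    refine ⟨fun i p => max (fderiv ℝ v p (0, EuclideanSpace.single i 1)) 0,
      fun i p => max (-(fderiv ℝ v p (0, EuclideanSpace.single i 1))) 0,
      ?_, ?_, ?_, ?_, ?_⟩
    · exact fun i => (hdc i).max continuous_const
    · exact fun i => (hdc i).neg.max continuous_const
    · intro i t ht x hx; exact ⟨le_max_right _ _, le_max_right _ _⟩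
    · intro i t ht x hx
      set a := fderiv ℝ v (t, x) (0, EuclideanSpace.single i 1) with ha
      show max a 0 - max (-a) 0 = a
      rcases le_total a 0 with hle | hle
      · rw [max_eq_right hle, max_eq_left (by linarith)]; ring
      · rw [max_eq_left hle, max_eq_right (by linarith)]; ring
    · intro t ht x hx
      have hsum : ∀ i : Fin n,
          max (fderiv ℝ v (t, x) (0, EuclideanSpace.single i 1)) 0 +
            max (-(fderiv ℝ v (t, x) (0, EuclideanSpace.single i 1))) 0 =
          |fderiv ℝ v (t, x) (0, EuclideanSpace.single i 1)| := by
        intro i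
        set a := fderiv ℝ v (t, x) (0, EuclideanSpace.single i 1) with ha
        rcases le_total a 0 with hle | hle
        · rw [max_eq_right hle, max_eq_left (by linarith), abs_of_nonpos hle]; ring
        · rw [max_eq_left hle, max_eq_right (by linarith), abs_of_nonneg hle]; ring
      show 0 < fderiv ℝ v (t, x) (1, 0) -
        ∑ i, (max (fderiv ℝ v (t, x) (0, EuclideanSpace.single i 1)) 0 +
          max (-(fderiv ℝ v (t, x) (0, EuclideanSpace.single i 1))) 0)
      rw [Finset.sum_congr rfl fun i _ => hsum i]
      set u : EuclideanSpace ℝ (Fin n) := WithLp.toLp 2 fun i =>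
        if 0 ≤ fderiv ℝ v (t, x) (0, EuclideanSpace.single i 1) then (-1 : ℝ) else 1
        with hu
      have hub : ∀ i, |u i| ≤ 1 := by
        intro i; simp only [hu, PiLp.toLp_apply]; split_ifs <;> norm_num
      have hlt := h t ht x hx u hub
      rw [box_expand v (t, x) u] at hlt
      have heq : ∀ i : Fin n,
          u i * fderiv ℝ v (t, x) (0, EuclideanSpace.single i 1) =
          -|fderiv ℝ v (t, x) (0, EuclideanSpace.single i 1)| := by
        intro i
        simp only [hu, PiLp.toLp_apply]
        split_ifs with h0
        · rw [abs_of_nonneg h0]; ring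
        · rw [abs_of_nonpos (le_of_not_ge h0)]; ring
      rw [Finset.sum_congr rfl fun i _ => heq i, Finset.sum_neg_distrib] at hlt
      linarith
  · rintro ⟨ζp, ζm, _, _, hnn, hdiff, hpos⟩ t ht x hx u hub
    rw [box_expand v (t, x) u]
    have hbound : ∀ i : Fin n, -(ζp i (t, x) + ζm i (t, x)) ≤
        u i * fderiv ℝ v (t, x) (0, EuclideanSpace.single i 1) := by
      intro i
      set a := fderiv ℝ v (t, x) (0, EuclideanSpace.single i 1) with ha
      have h1 : |a| ≤ ζp i (t, x) + ζm i (t, x) := by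
        rw [ha, ← hdiff i t ht x hx]
        obtain ⟨h2, h3⟩ := hnn i t ht x hx
        rw [abs_sub_le_iff]; constructor <;> linarith
      have h4 : |u i * a| ≤ |a| := by
        rw [abs_mul]
        calc |u i| * |a| ≤ 1 * |a| :=
              mul_le_mul_of_nonneg_right (hub i) (abs_nonneg _)
          _ = |a| := one_mul _
      have h5 := neg_abs_le (u i * a)
      linarith
    have hs : -∑ i, (ζp i (t, x) + ζm i (t, x)) ≤
        ∑ i, u i * fderiv ℝ v (t, x) (0, EuclideanSpace.single i 1) := by
      rw [← Finset.sum_neg_distrib]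
      exact Finset.sum_le_sum fun i _ => hbound i
    have := hpos t ht x hx
    linarith
end

section
/- Let T > 0 and let X₀, X₁, X ⊆ ℝ^n be sets with X₀ nonempty and compact, X₀ ⊆ X, and X₁ ⊆ X. Let ṽ : ℝ × ℝ^n → ℝ be continuously differentiable with ṽ(0,x) > 0 for all x ∈ X₀, ṽ(T,x) < 0 for all x ∈ X₁, and ∂_t ṽ(t,x) + ⟨u, ∇_x ṽ(t,x)⟩ > 0 for all (t,x,u) ∈ [0,T] × X × [-1,1]^n. Let w : ℝ × ℝ^n → ℝ be continuously differentiable and let η, δ > 0 be such that: |w(t,x) − ṽ(t,x)| ≤ η for all (t,x) ∈ [0,T] × X; |∂_t w(t,x) + ⟨u, ∇_x w(t,x)⟩ − ∂_t ṽ(t,x) − ⟨u, ∇_x ṽ(t,x)⟩| ≤ η for all (t,x,u) ∈ [0,T] × X × [-1,1]^n; η + δ < min_{x ∈ X₀} ṽ(0,x); and η < min(1, 1/T)·δ/2. Then the function V(t,x) := w(t,x) − δ(1 − t/(2T)) satisfies V(0,x) > 0 for all x ∈ X₀, V(T,x) < 0 for all x ∈ X₁, and ∂_t V(t,x) + ⟨u,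 ∇_x V(t,x)⟩ > 0 for all (t,x,u) ∈ [0,T] × X × [-1,1]^n. -/
/-- Quantitative shift step of Theorem B.2: if `w` approximates a strict
barrier `ṽ` within `η` in both value and Lie derivative over the relevant
compact sets, and the tolerances satisfy `η + δ < min_{X₀} ṽ(0,·)` and
`η < min(1, 1/T)·δ/2`, then `V(t,x) = w(t,x) − δ(1 − t/(2T))` is again a
strict barrier function. -/
theorem approximation_shift_barrier {n : ℕ} (T : ℝ) (hT : 0 < T)
    (X₀ X₁ X : Set (EuclideanSpace ℝ (Fin n)))
    (hX₀c : IsCompact X₀) (hX₀ne : X₀.Nonempty) (hX₀X : X₀ ⊆ X) (hX₁X : X₁ ⊆ X)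
    (vt : ℝ × EuclideanSpace ℝ (Fin n) → ℝ) (hvt : ContDiff ℝ 1 vt)
    (hvt₀ : ∀ x ∈ X₀, 0 < vt (0, x))
    (hvt₁ : ∀ x ∈ X₁, vt (T, x) < 0)
    (hvtlie : ∀ t ∈ Set.Icc (0 : ℝ) T, ∀ x ∈ X, ∀ u : EuclideanSpace ℝ (Fin n),
      (∀ i, |u i| ≤ 1) → 0 < fderiv ℝ vt (t, x) (1, u))
    (w : ℝ × EuclideanSpace ℝ (Fin n) → ℝ) (hw : ContDiff ℝ 1 w)
    (η δ : ℝ) (hη : 0 < η) (hδ : 0 < δ)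
    (happrox : ∀ t ∈ Set.Icc (0 : ℝ) T, ∀ x ∈ X, |w (t, x) - vt (t, x)| ≤ η)
    (hliapprox : ∀ t ∈ Set.Icc (0 : ℝ) T, ∀ x ∈ X, ∀ u : EuclideanSpace ℝ (Fin n),
      (∀ i, |u i| ≤ 1) →
      |fderiv ℝ w (t, x) (1, u) - fderiv ℝ vt (t, x) (1, u)| ≤ η)
    (hmin : ∀ x ∈ X₀, η + δ < vt (0, x))
    (hηδ : η < min 1 (1 / T) * δ / 2) :
    (∀ x ∈ X₀, 0 < (fun q : ℝ × EuclideanSpace ℝ (Fin n) =>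
        w q - δ * (1 - q.1 / (2 * T))) (0, x)) ∧
    (∀ x ∈ X₁, (fun q : ℝ × EuclideanSpace ℝ (Fin n) =>
        w q - δ * (1 - q.1 / (2 * T))) (T, x) < 0) ∧
    (∀ t ∈ Set.Icc (0 : ℝ) T, ∀ x ∈ X, ∀ u : EuclideanSpace ℝ (Fin n),
      (∀ i, |u i| ≤ 1) →
      0 < fderiv ℝ (fun q : ℝ × EuclideanSpace ℝ (Fin n) =>
        w q - δ * (1 - q.1 / (2 * T))) (t, x) (1, u)) := by

  have hT2 : (0:ℝ) < 2 * T := by linarith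
  have hηhalf : η < δ / 2 := by
    have h0 := mul_le_mul_of_nonneg_right (min_le_left 1 (1/T)) hδ.le
    rw [one_mul] at h0
    linarith
  have hη2T : η < δ / (2 * T) := by
    have h0 := mul_le_mul_of_nonneg_right (min_le_right 1 (1/T)) hδ.le
    have he : (1/T) * δ = δ / T := by field_simp
    rw [he] at h0
    have h2 : δ / T / 2 = δ / (2 * T) := by rw [div_div, mul_comm]
    linarith
  have h0mem : (0:ℝ) ∈ Set.Icc (0:ℝ) T := ⟨le_refl _, le_of_lt hT⟩
  have hTmem : T ∈ Set.Icc (0:ℝ) T := ⟨le_of_lt hT, le_refl _⟩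
  refine ⟨?_, ?_, ?_⟩
  · intro x hx
    have h1 := happrox 0 h0mem x (hX₀X hx)
    have h2 := hmin x hx
    have := abs_le.mp h1
    simp only
    have : (0:ℝ) / (2 * T) = 0 := by simp
    rw [this]
    nlinarith [this]
  · intro x hx
    have h1 := happrox T hTmem x (hX₁X hx)
    have h2 := hvt₁ x hx
    have h3 := abs_le.mp h1
    simp only
    have hTdiv : T / (2 * T) = 1 / 2 := by field_simp
    rw [hTdiv]
    nlinarith
  · intro t ht x hx u hu
    set p := ((t, x) : ℝ × EuclideanSpace ℝ (Fin n)) with hp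
    have hfst : HasFDerivAt (fun q : ℝ × EuclideanSpace ℝ (Fin n) => q.1)
        (ContinuousLinearMap.fst ℝ ℝ (EuclideanSpace ℝ (Fin n))) p := hasFDerivAt_fst
    have h1 : HasFDerivAt (fun q : ℝ × EuclideanSpace ℝ (Fin n) => q.1 / (2 * T))
        ((2 * T)⁻¹ • ContinuousLinearMap.fst ℝ ℝ (EuclideanSpace ℝ (Fin n))) p :=
      by simpa [div_eq_mul_inv] using hfst.mul_const (2 * T)⁻¹
    have h2 := h1.const_sub 1
    have h3 := h2.const_mul δ
    have hwd : HasFDerivAt w (fderiv ℝ w p) p :=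
      (hw.differentiable one_ne_zero).differentiableAt.hasFDerivAt
    have hV := hwd.sub h3
    have hfd : fderiv ℝ (fun q : ℝ × EuclideanSpace ℝ (Fin n) =>
        w q - δ * (1 - q.1 / (2 * T))) p = _ := hV.fderiv
    rw [hfd]
    have hu' : ∀ i, |u i| ≤ 1 := hu
    have hlie := hvtlie t ht x hx u hu
    have hla := hliapprox t ht x hx u hu
    have hla' := abs_le.mp hla
    simp only [ContinuousLinearMap.sub_apply, ContinuousLinearMap.smul_apply,
      ContinuousLinearMap.neg_apply, ContinuousLinearMap.coe_fst', smul_eq_mul]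
    have : fderiv ℝ w p (1, u) = fderiv ℝ w (t, x) (1, u) := by rw [hp]
    rw [this]
    have key : δ * -((2 * T)⁻¹ * 1) = -(δ / (2 * T)) := by
      field_simp
    linarith [hla'.1, hlie, key]
end

section
/- Let T > 0 and let X ⊆ ℝ^n be a compact set. Let v be a polynomial function of the n+1 real variables (t, x₁, …, x_n) such that ∂_t v(t,x) + ⟨u, ∇_x v(t,x)⟩ > 0 for all (t,x,u) ∈ [0,T] × X × [-1,1]^n. Then there exist polynomial functions ζᵢ⁺, ζᵢ⁻ of (t, x₁, …, x_n) for i = 1, …, n such that: ζᵢ⁺(t,x) ≥ 0 and ζᵢ⁻(t,x) ≥ 0 for all (t,x) ∈ [0,T] × X; ζᵢ⁺ − ζᵢ⁻ = ∂_{x_i} v identically (as polynomials) for each i; and ∂_t v(t,x) − Σᵢ₌₁ⁿ (ζᵢ⁺(t,x) + ζᵢ⁻(t,x)) > 0 for all (t,x) ∈ [0,T] × X. -/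
open MvPolynomial

private lemma sign_facts (r : ℝ) : |(-Real.sign r)| ≤ 1 ∧ (-Real.sign r) * r = -|r| := by
  rcases lt_trichotomy r 0 with h | h | h
  · rw [Real.sign_of_neg h, abs_of_neg h]; norm_num
  · simp [h, Real.sign_zero]
  · rw [Real.sign_of_pos h, abs_of_pos h]; norm_num

private lemma eval_poly_aeval {m : ℕ} (y : Fin m → ℝ) (r : MvPolynomial (Fin m) ℝ)
    (q : Polynomial ℝ) :
    MvPolynomial.eval y (Polynomial.aeval r q) = q.eval (MvPolynomial.eval y r) := by
  rw [Polynomial.aeval_def, Polynomial.hom_eval₂]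
  have : (MvPolynomial.eval y).comp (algebraMap ℝ (MvPolynomial (Fin m) ℝ)) = RingHom.id ℝ := by
    ext r; simp
  rw [this]
  rfl

/-- Theorem B.3 of the paper -/
theorem polynomial_multipliers_exist {n : ℕ} (T : ℝ) (hT : 0 < T)
    (X : Set (EuclideanSpace ℝ (Fin n))) (hX : IsCompact X)
    (p : MvPolynomial (Fin (n + 1)) ℝ)
    (hlie : ∀ t ∈ Set.Icc (0 : ℝ) T, ∀ x ∈ X, ∀ u : EuclideanSpace ℝ (Fin n),
      (∀ i, |u i| ≤ 1) →
      0 < MvPolynomial.eval (Fin.cons t (fun i => x i)) (MvPolynomial.pderiv 0 p) +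
        ∑ i : Fin n, u i *
          MvPolynomial.eval (Fin.cons t (fun j => x j)) (MvPolynomial.pderiv i.succ p)) :
    ∃ ζp ζm : Fin n → MvPolynomial (Fin (n + 1)) ℝ,
      (∀ i : Fin n, ∀ t ∈ Set.Icc (0 : ℝ) T, ∀ x ∈ X,
        0 ≤ MvPolynomial.eval (Fin.cons t (fun j => x j)) (ζp i) ∧
        0 ≤ MvPolynomial.eval (Fin.cons t (fun j => x j)) (ζm i)) ∧
      (∀ i : Fin n, ζp i - ζm i = MvPolynomial.pderiv i.succ p) ∧
      (∀ t ∈ Set.Icc (0 : ℝ) T, ∀ x ∈ X,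
        0 < MvPolynomial.eval (Fin.cons t (fun j => x j)) (MvPolynomial.pderiv 0 p) -
          ∑ i : Fin n,
            (MvPolynomial.eval (Fin.cons t (fun j => x j)) (ζp i) +
             MvPolynomial.eval (Fin.cons t (fun j => x j)) (ζm i))) := by
  classical
  rcases X.eq_empty_or_nonempty with rfl | hXne
  · exact ⟨fun i => MvPolynomial.pderiv i.succ p, fun _ => 0,
      fun i t _ x hx => absurd hx (Set.notMem_empty x),
      fun i => by simp,
      fun t _ x hx => absurd hx (Set.notMem_empty x)⟩
  set d : Fin n → MvPolynomial (Fin (n + 1)) ℝ := fun i => MvPolynomial.pderiv i.succ p with hd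
  set dt : MvPolynomial (Fin (n + 1)) ℝ := MvPolynomial.pderiv 0 p with hdt
  -- the compact set of evaluation points
  set φ : ℝ × EuclideanSpace ℝ (Fin n) → (Fin (n + 1) → ℝ) :=
    fun q => Fin.cons q.1 (fun j => q.2 j) with hφ
  have hφc : Continuous φ := by
    apply continuous_pi
    intro j
    refine Fin.cases ?_ ?_ j
    · simpa [hφ] using continuous_fst
    · intro i
      simpa [hφ, Function.comp_def] using (EuclideanSpace.proj (𝕜 := ℝ) i).continuous.comp continuous_snd
  set S : Set (Fin (n + 1) → ℝ) := φ '' ((Set.Icc (0 : ℝ) T) ×ˢ X) with hS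
  have hSc : IsCompact S := (isCompact_Icc.prod hX).image hφc
  have hSne : S.Nonempty := by
    obtain ⟨x, hx⟩ := hXne
    exact ⟨φ (0, x), Set.mem_image_of_mem _ ⟨Set.left_mem_Icc.2 hT.le, hx⟩⟩
  -- the margin function
  set g : (Fin (n + 1) → ℝ) → ℝ :=
    fun y => MvPolynomial.eval y dt - ∑ i : Fin n, |MvPolynomial.eval y (d i)| with hg
  have hgc : Continuous g := by
    exact (MvPolynomial.continuous_eval dt).sub
      (continuous_finset_sum _ fun i _ => (MvPolynomial.continuous_eval (d i)).abs)
  have hgpos : ∀ y ∈ S, 0 < g y := by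
    rintro y ⟨⟨t, x⟩, ⟨ht, hx⟩, rfl⟩
    have h := hlie t ht x hx (WithLp.toLp 2 (fun i => -Real.sign (MvPolynomial.eval (φ (t, x)) (d i))))
      (fun i => (sign_facts _).1)
    have heq : ∀ i : Fin n,
        (-Real.sign (MvPolynomial.eval (φ (t, x)) (d i))) *
          MvPolynomial.eval (Fin.cons t (fun j => x j)) (MvPolynomial.pderiv i.succ p)
        = -|MvPolynomial.eval (φ (t, x)) (d i)| := fun i => (sign_facts _).2
    simp only [WithLp.ofLp_toLp, heq] at h
    simpa [hg, hφ, sub_eq_add_neg, Finset.sum_neg_distrib] using h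
  obtain ⟨y₀, hy₀S, hy₀'⟩ := hSc.exists_isMinOn hSne hgc.continuousOn
  have hy₀ : ∀ y ∈ S, g y₀ ≤ g y := fun y hy => hy₀' hy
  set ε : ℝ := g y₀ with hε
  have hεpos : 0 < ε := hgpos y₀ hy₀S
  -- a uniform bound on the gradient entries
  obtain ⟨y₁, _, hy₁'⟩ := hSc.exists_isMaxOn hSne
    (continuous_finset_sum Finset.univ
      (fun i _ => (MvPolynomial.continuous_eval (d i)).abs)).continuousOn
  have hy₁ : ∀ y ∈ S, (∑ i : Fin n, |MvPolynomial.eval y (d i)|)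
      ≤ ∑ i : Fin n, |MvPolynomial.eval y₁ (d i)| := fun y hy => hy₁' hy
  set M : ℝ := ∑ i : Fin n, |MvPolynomial.eval y₁ (d i)| with hM
  have hMb : ∀ y ∈ S, ∀ i : Fin n, |MvPolynomial.eval y (d i)| ≤ M := by
    intro y hy i
    calc |MvPolynomial.eval y (d i)|
        ≤ ∑ j : Fin n, |MvPolynomial.eval y (d j)| :=
          Finset.single_le_sum (f := fun j => |MvPolynomial.eval y (d j)|)
            (fun j _ => abs_nonneg _) (Finset.mem_univ i)
      _ ≤ M := hy₁ y hy
  -- approximate |·| on [-M, M]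
  set δ : ℝ := ε / (2 * n + 1) with hδ
  have hδpos : 0 < δ := div_pos hεpos (by positivity)
  obtain ⟨q, hq⟩ := exists_polynomial_near_of_continuousOn (-M) M (fun s => |s|)
    continuous_abs.continuousOn δ hδpos
  -- the dominating polynomials
  set Q : Fin n → MvPolynomial (Fin (n + 1)) ℝ :=
    fun i => Polynomial.aeval (d i) q + MvPolynomial.C δ with hQ
  have hQbound : ∀ y ∈ S, ∀ i : Fin n,
      |MvPolynomial.eval y (d i)| ≤ MvPolynomial.eval y (Q i) ∧
      MvPolynomial.eval y (Q i) ≤ |MvPolynomial.eval y (d i)| + 2 * δ := by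
    intro y hy i
    have hmem : MvPolynomial.eval y (d i) ∈ Set.Icc (-M) M := by
      have := hMb y hy i; constructor <;> [linarith [abs_le.1 this]; exact (abs_le.1 this).2]
    have h1 := hq _ hmem
    have h2 : MvPolynomial.eval y (Q i) = q.eval (MvPolynomial.eval y (d i)) + δ := by
      simp [hQ, eval_poly_aeval]
    rw [h2]
    rw [abs_lt] at h1
    constructor <;> linarith [h1.1, h1.2]
  refine ⟨fun i => MvPolynomial.C (2⁻¹ : ℝ) * (Q i + d i),
    fun i => MvPolynomial.C (2⁻¹ : ℝ) * (Q i - d i), ?_, ?_, ?_⟩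
  · intro i t ht x hx
    have hyS : φ (t, x) ∈ S := Set.mem_image_of_mem _ ⟨ht, hx⟩
    obtain ⟨hb1, _⟩ := hQbound _ hyS i
    have h1 := abs_le.1 hb1
    constructor <;>
    · show (0:ℝ) ≤ MvPolynomial.eval (Fin.cons t (fun j => x j)) _
      simp only [map_mul, map_add, map_sub, MvPolynomial.eval_C]
      have : Fin.cons t (fun j => x j) = φ (t, x) := rfl
      rw [this]
      nlinarith [abs_le.1 hb1, abs_nonneg (MvPolynomial.eval (φ (t, x)) (d i))]
  · intro i
    have h2 : (MvPolynomial.C (2⁻¹ : ℝ) : MvPolynomial (Fin (n + 1)) ℝ) * 2 = 1 := by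
      rw [(map_ofNat (MvPolynomial.C (σ := Fin (n+1))) 2).symm, ← MvPolynomial.C_mul]
      norm_num
    have : MvPolynomial.C (2⁻¹ : ℝ) * (Q i + d i) - MvPolynomial.C (2⁻¹ : ℝ) * (Q i - d i)
        = (MvPolynomial.C (2⁻¹ : ℝ) * 2) * d i := by ring
    rw [this, h2, one_mul]
  · intro t ht x hx
    have hyS : φ (t, x) ∈ S := Set.mem_image_of_mem _ ⟨ht, hx⟩
    have hsum : ∀ i : Fin n,
        MvPolynomial.eval (Fin.cons t (fun j => x j))
            (MvPolynomial.C (2⁻¹ : ℝ) * (Q i + d i)) +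
          MvPolynomial.eval (Fin.cons t (fun j => x j))
            (MvPolynomial.C (2⁻¹ : ℝ) * (Q i - d i))
        = MvPolynomial.eval (φ (t, x)) (Q i) := by
      intro i
      have : Fin.cons t (fun j => x j) = φ (t, x) := rfl
      simp only [map_mul, map_add, map_sub, MvPolynomial.eval_C, this]
      ring
    rw [Finset.sum_congr rfl (fun i _ => hsum i)]
    have hge : ε ≤ g (φ (t, x)) := hy₀ _ hyS
    have hQs : ∑ i : Fin n, MvPolynomial.eval (φ (t, x)) (Q i)
        ≤ (∑ i : Fin n, |MvPolynomial.eval (φ (t, x)) (d i)|) + n * (2 * δ) := by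
      calc ∑ i : Fin n, MvPolynomial.eval (φ (t, x)) (Q i)
          ≤ ∑ i : Fin n, (|MvPolynomial.eval (φ (t, x)) (d i)| + 2 * δ) :=
            Finset.sum_le_sum (fun i _ => (hQbound _ hyS i).2)
        _ = (∑ i : Fin n, |MvPolynomial.eval (φ (t, x)) (d i)|) + n * (2 * δ) := by
            rw [Finset.sum_add_distrib, Finset.sum_const, Finset.card_univ,
              Fintype.card_fin, nsmul_eq_mul]
    have hδ' : (n : ℝ) * (2 * δ) < ε := by
      rw [hδ]
      rw [div_eq_inv_mul]
      have h1 : (0:ℝ) < 2 * n + 1 := by positivity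
      rw [mul_comm (((2:ℝ) * n + 1)⁻¹)]
      rw [show (n : ℝ) * (2 * (ε * (2 * ↑n + 1)⁻¹)) = (2 * n) * ε * (2 * ↑n + 1)⁻¹ by ring]
      calc (2 * (n:ℝ)) * ε * (2 * ↑n + 1)⁻¹ < (2 * ↑n + 1) * ε * (2 * ↑n + 1)⁻¹ := by
            apply mul_lt_mul_of_pos_right _ (inv_pos.2 h1)
            exact mul_lt_mul_of_pos_right (by linarith) hεpos
        _ = ε := by field_simp
    have hgdef : g (φ (t, x)) = MvPolynomial.eval (φ (t, x)) dt -
        ∑ i : Fin n, |MvPolynomial.eval (φ (t, x)) (d i)| := rfl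
    have : Fin.cons t (fun j => x j) = φ (t, x) := rfl
    rw [this]
    rw [hgdef] at hge
    have : MvPolynomial.eval (φ (t, x)) (MvPolynomial.pderiv 0 p)
        = MvPolynomial.eval (φ (t, x)) dt := rfl
    rw [this]
    linarith
end

section
/- Let n ≥ 1, let U ⊆ ℝ^n be a set with 0 in its topological interior, let X ⊆ ℝ^n be a set with nonempty topological interior, and let X₀, X₁ ⊆ X be nonempty sets. Then there is no polynomial function v : ℝ^n → ℝ (a polynomial in x₁, …, x_n with real coefficients) satisfying simultaneously: v(x) ≥ 1 for all x ∈ X₀; v(x) ≤ 0 for all x ∈ X₁; and ⟨u, ∇v(x)⟩ ≥ 0 for all x ∈ X and all u ∈ U. -/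
open scoped RealInnerProductSpace

lemma mvpoly_analytic {n : ℕ} (p : MvPolynomial (Fin n) ℝ) :
    AnalyticOnNhd ℝ (fun x : EuclideanSpace ℝ (Fin n) => MvPolynomial.eval (fun i => x i) p) Set.univ := by
  induction p using MvPolynomial.induction_on with
  | C a => simpa using analyticOnNhd_const
  | add p q hp hq => simpa [MvPolynomial.eval_add, Pi.add_def] using hp.add hq
  | mul_X p i hp =>
      have hc : AnalyticOnNhd ℝ (fun x : EuclideanSpace ℝ (Fin n) => x i) Set.univ :=
        (EuclideanSpace.proj i : EuclideanSpace ℝ (Fin n) →L[ℝ] ℝ).analyticOnNhd _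
      simpa [MvPolynomial.eval_mul] using hp.mul hc


/-- Infeasibility of the time-independent polynomial barrier program
(Section 4.2 of the paper): if `0` lies in the interior of the control set
`U`, `X` has nonempty interior and `X₀, X₁ ⊆ X` are nonempty, then no
polynomial `v` can satisfy `v ≥ 1` on `X₀`, `v ≤ 0` on `X₁`, and
`⟨u, ∇v(x)⟩ ≥ 0` on `X × U`. -/
theorem no_time_independent_polynomial_barrier {n : ℕ} (hn : 1 ≤ n)
    (U X X₀ X₁ : Set (EuclideanSpace ℝ (Fin n)))
    (hU : (0 : EuclideanSpace ℝ (Fin n)) ∈ interior U)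
    (hX : (interior X).Nonempty)
    (hX₀ne : X₀.Nonempty) (hX₁ne : X₁.Nonempty)
    (hX₀X : X₀ ⊆ X) (hX₁X : X₁ ⊆ X) :
    ¬ ∃ p : MvPolynomial (Fin n) ℝ,
      (∀ x ∈ X₀, 1 ≤ MvPolynomial.eval (fun i => x i) p) ∧
      (∀ x ∈ X₁, MvPolynomial.eval (fun i => x i) p ≤ 0) ∧
      (∀ x ∈ X, ∀ u ∈ U,
        0 ≤ ⟪u, gradient (fun y : EuclideanSpace ℝ (Fin n) =>
          MvPolynomial.eval (fun i => y i) p) x⟫) := by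
  rintro ⟨p, h0, h1, hgrad⟩
  set f : EuclideanSpace ℝ (Fin n) → ℝ :=
    fun y => MvPolynomial.eval (fun i => y i) p with hf
  have hfa : AnalyticOnNhd ℝ f Set.univ := mvpoly_analytic p
  -- gradient vanishes on X
  have hg0 : ∀ x ∈ X, gradient f x = 0 := by
    intro x hx
    set g := gradient f x with hgdef
    by_contra hgne
    obtain ⟨ε, hε, hball⟩ := Metric.isOpen_iff.1 isOpen_interior 0 hU
    have hgnorm : 0 < ‖g‖ := norm_pos_iff.2 hgne
    set u : EuclideanSpace ℝ (Fin n) := (-(ε / 2 / ‖g‖)) • g with hu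
    have hunorm : ‖u‖ < ε := by
      rw [hu, norm_smul]
      simp only [norm_neg, Real.norm_eq_abs, abs_div]
      rw [abs_of_pos hε, abs_of_pos (by norm_num : (0:ℝ) < 2), abs_of_pos hgnorm,
        div_mul_cancel₀ _ (ne_of_gt hgnorm)]
      linarith
    have huU : u ∈ U := interior_subset (hball (by simpa [Metric.mem_ball] using hunorm))
    have := hgrad x hx u huU
    rw [hu, real_inner_smul_left, real_inner_self_eq_norm_sq] at this
    have hpos : 0 < ε / 2 / ‖g‖ * ‖g‖ ^ 2 := by positivity
    linarith
  -- fderiv vanishes on X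
  have hfd0 : ∀ x ∈ X, fderiv ℝ f x = 0 := by
    intro x hx
    have h := hg0 x hx
    unfold gradient at h
    have := congrArg (InnerProductSpace.toDual ℝ (EuclideanSpace ℝ (Fin n))) h
    simpa using this
  -- f is constant on a ball inside X
  obtain ⟨c, hc⟩ := hX
  obtain ⟨r, hr, hballX⟩ := Metric.isOpen_iff.1 isOpen_interior c hc
  have hballX' : Metric.ball c r ⊆ X := hballX.trans interior_subset
  have hconst : ∀ x ∈ Metric.ball c r, f x = f c := by
    intro x hx
    have hdiff : ∀ y ∈ Metric.ball c r, DifferentiableAt ℝ f y := fun y _ =>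
      (hfa y (Set.mem_univ y)).differentiableAt
    have hbound : ∀ y ∈ Metric.ball c r, ‖fderiv ℝ f y‖ ≤ 0 := fun y hy => by
      rw [hfd0 y (hballX' hy)]; simp
    have := (convex_ball c r).norm_image_sub_le_of_norm_fderiv_le hdiff hbound
      (Metric.mem_ball_self hr) hx
    have h0 : ‖f x - f c‖ ≤ 0 := by simpa using this
    have := norm_nonneg (f x - f c)
    have : ‖f x - f c‖ = 0 := le_antisymm h0 this
    rwa [norm_eq_zero, sub_eq_zero] at this
  -- identity theorem: f = f c everywhere
  have hfc : ∀ x, f x = f c := by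
    have hA : AnalyticOnNhd ℝ (fun x => f x - f c) Set.univ :=
      hfa.sub analyticOnNhd_const
    have hev : (fun x => f x - f c) =ᶠ[nhds c] 0 := by
      filter_upwards [Metric.ball_mem_nhds c hr] with x hx
      simp [hconst x hx]
    have := hA.eqOn_zero_of_preconnected_of_eventuallyEq_zero
      isPreconnected_univ (Set.mem_univ c) hev
    intro x
    have hx := this (Set.mem_univ x)
    simpa [sub_eq_zero] using hx
  obtain ⟨x₀, hx₀⟩ := hX₀ne
  obtain ⟨x₁, hx₁⟩ := hX₁ne
  have h1' := h0 x₀ hx₀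
  have h2' := h1 x₁ hx₁
  rw [show MvPolynomial.eval (fun i => x₀ i) p = f x₀ from rfl, hfc x₀] at h1'
  rw [show MvPolynomial.eval (fun i => x₁ i) p = f x₁ from rfl, hfc x₁] at h2'
  linarith
end
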